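/- For every ρ with (π−2)/(π+2) < ρ < 1, set c = √((1+ρ)/(1−ρ)) (so that c > √(π/2)). Then there exists a unique u* > 0 such that 1 − 2·Φ(c·u*) + u* = 0; moreover, −u* also satisfies the same equation, so the equation 1 − 2·Φ(c·u) + u = 0 has exactly the three real solutions −u*, 0, u*. -/

import Mathlib

open ProbabilityTheory Real Set

/-- The cumulative distribution function of the standard normal distribution `N(0,1)`. -/
noncomputable def stdNormCDF : ℝ → ℝ := fun x => ProbabilityTheory.cdf (gaussianReal 0 1) x

open MeasureTheory Filter

noncomputable def sg : ℝ → ℝ := gaussianPDFReal 0 1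

lemma sg_eq (t : ℝ) : sg t = (Real.sqrt (2 * π))⁻¹ * Real.exp (-t ^ 2 / 2) := by
  simp [sg, gaussianPDFReal]

lemma sg_pos (t : ℝ) : 0 < sg t := gaussianPDFReal_pos 0 1 t one_ne_zero

lemma sg_even (t : ℝ) : sg (-t) = sg t := by simp [sg_eq]

lemma sg_cont : Continuous sg := by
  rw [show sg = fun t => (Real.sqrt (2 * π))⁻¹ * Real.exp (-t ^ 2 / 2) from funext sg_eq]
  continuity

lemma sg_int : MeasureTheory.Integrable sg := integrable_gaussianPDFReal 0 1

lemma sg_total : ∫ t, sg t = 1 := integral_gaussianPDFReal_eq_one 0 one_ne_zero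

lemma stdNormCDF_eq (x : ℝ) : stdNormCDF x = ∫ t in Iic x, sg t := by
  rw [stdNormCDF, cdf_eq_real, measureReal_def, gaussianReal_apply_eq_integral 0 one_ne_zero,
    ENNReal.toReal_ofReal (integral_nonneg fun t => (gaussianPDFReal_nonneg 0 1 t))]
  rfl

lemma stdNormCDF_zero : stdNormCDF 0 = 1 / 2 := by
  have h1 : (∫ t in Iic (0:ℝ), sg t) + ∫ t in Ioi (0:ℝ), sg t = 1 := by
    rw [intervalIntegral.integral_Iic_add_Ioi sg_int.integrableOn sg_int.integrableOn]
    exact sg_total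
  have h2 : (∫ t in Ioi (0:ℝ), sg t) = ∫ t in Iic (0:ℝ), sg t := by
    rw [show (Iic (0:ℝ)) = Iic (-0) by norm_num, ← integral_comp_neg_Ioi]
    simp [sg_even]
  rw [stdNormCDF_eq]
  linarith [h1, h2]

lemma stdNormCDF_neg (x : ℝ) : stdNormCDF (-x) = 1 - stdNormCDF x := by
  have h1 : (∫ t in Iic x, sg t) + ∫ t in Ioi x, sg t = 1 := by
    rw [intervalIntegral.integral_Iic_add_Ioi sg_int.integrableOn sg_int.integrableOn]
    exact sg_total
  have h2 : (∫ t in Iic (-x), sg t) = ∫ t in Ioi x, sg t := by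
    have := integral_comp_neg_Iic (-x) sg
    simp only [sg_even, neg_neg] at this
    exact this
  rw [stdNormCDF_eq, stdNormCDF_eq, h2]
  linarith

lemma stdNormCDF_hasDerivAt (x : ℝ) : HasDerivAt stdNormCDF (sg x) x := by
  have heq : stdNormCDF = fun y => (1:ℝ)/2 + ∫ t in (0:ℝ)..y, sg t := by
    funext y
    rw [stdNormCDF_eq, ← intervalIntegral.integral_Iic_sub_Iic sg_int.integrableOn
      sg_int.integrableOn, ← stdNormCDF_eq, ← stdNormCDF_eq, stdNormCDF_zero]
    ring
  rw [heq]
  exact (intervalIntegral.integral_hasDerivAt_right sg_int.intervalIntegrable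
    (sg_cont.stronglyMeasurable.stronglyMeasurableAtFilter) sg_cont.continuousAt).const_add _


/-- For `(π−2)/(π+2) < ρ < 1` and `c = √((1+ρ)/(1−ρ))` (so that `c > √(π/2)`), there is a unique
`u* > 0` with `1 − 2·Φ(c·u*) + u* = 0`; moreover `−u*` also satisfies the equation, and the
equation `1 − 2·Φ(c·u) + u = 0` has exactly the three real solutions `−u*`, `0`, `u*`. -/
theorem stmt_2 (ρ : ℝ) (h1 : (π - 2) / (π + 2) < ρ) (h2 : ρ < 1)
    (c : ℝ) (hc : c = Real.sqrt ((1 + ρ) / (1 - ρ))) :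
    Real.sqrt (π / 2) < c ∧
      ∃ ustar : ℝ, 0 < ustar ∧
        ∀ u : ℝ, 1 - 2 * stdNormCDF (c * u) + u = 0 ↔ u = -ustar ∨ u = 0 ∨ u = ustar := by
  have hπ : 0 < π := Real.pi_pos
  have hπ2 : (2:ℝ) < π := by linarith [Real.pi_gt_three]
  have hρpos : 0 < ρ := lt_trans (div_pos (by linarith) (by linarith)) h1
  have hρ1 : (0:ℝ) < 1 - ρ := by linarith
  -- first conjunct
  have hfrac : π / 2 < (1 + ρ) / (1 - ρ) := by
    rw [div_lt_div_iff₀ (by norm_num) hρ1]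
    have := (div_lt_iff₀ (by linarith : (0:ℝ) < π + 2)).mp h1
    nlinarith
  have hcpi : Real.sqrt (π / 2) < c := by
    rw [hc]
    exact Real.sqrt_lt_sqrt (by linarith) hfrac
  have hc0 : 0 < c := lt_of_le_of_lt (Real.sqrt_nonneg _) hcpi
  refine ⟨hcpi, ?_⟩
  set f : ℝ → ℝ := fun u => 1 - 2 * stdNormCDF (c * u) + u with hf
  -- derivative of f
  have hfd : ∀ u : ℝ, HasDerivAt f (1 - 2 * (c * sg (c * u))) u := by
    intro u
    have hlin : HasDerivAt (fun u : ℝ => c * u) c u := by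
      simpa using (hasDerivAt_id u).const_mul c
    have h1 : HasDerivAt (fun u : ℝ => stdNormCDF (c * u)) (sg (c * u) * c) u :=
      (stdNormCDF_hasDerivAt (c * u)).comp u hlin
    have h2 := ((h1.const_mul 2).const_sub 1).add (hasDerivAt_id u)
    exact h2.congr_deriv (by ring)
  have hfc : Continuous f := by
    rw [continuous_iff_continuousAt]; exact fun u => (hfd u).continuousAt
  have hf0 : f 0 = 0 := by simp [hf, stdNormCDF_zero]
  -- oddness
  have hodd : ∀ u : ℝ, f (-u) = -f u := by
    intro u
    simp only [hf]
    rw [show c * -u = -(c * u) by ring, stdNormCDF_neg]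
    ring
  -- strict convexity on Ici 0
  have hsqrt2pi : 0 < Real.sqrt (2 * π) := Real.sqrt_pos.mpr (by positivity)
  have hmono : StrictMonoOn (deriv f) (interior (Ici (0:ℝ))) := by
    rw [interior_Ici]
    intro a ha b hb hab
    rw [(hfd a).deriv, (hfd b).deriv]
    have ha0 : (0:ℝ) < a := ha
    have hgab : sg (c * b) < sg (c * a) := by
      rw [sg_eq, sg_eq]
      have : Real.exp (-(c*b)^2/2) < Real.exp (-(c*a)^2/2) := by
        apply Real.exp_lt_exp.mpr
        nlinarith [mul_pos (mul_pos hc0 hc0)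
          (mul_pos (sub_pos.mpr hab) (by linarith : (0:ℝ) < a + b))]
      have hinv : (0:ℝ) < (Real.sqrt (2*π))⁻¹ := by positivity
      nlinarith
    nlinarith
  have hconv : StrictConvexOn ℝ (Ici (0:ℝ)) f :=
    hmono.strictConvexOn_of_deriv (convex_Ici 0) hfc.continuousOn
  -- f' 0 < 0, hence f is negative just right of 0
  have hderiv0 : 1 - 2 * (c * sg (c * 0)) < 0 := by
    have hval : sg (c * 0) = (Real.sqrt (2 * π))⁻¹ := by
      rw [mul_zero, sg_eq]; norm_num
    rw [hval]
    have hs : Real.sqrt (2 * π) < 2 * c := by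
      rw [Real.sqrt_lt' (by linarith)]
      have : π / 2 < c ^ 2 := by
        have := Real.sqrt_lt' hc0 |>.mp hcpi
        linarith
      nlinarith
    rw [sub_neg, show 2 * (c * (Real.sqrt (2 * π))⁻¹) = (2 * c) / Real.sqrt (2 * π) by
      field_simp]
    exact (one_lt_div hsqrt2pi).mpr hs
  -- f is negative just to the right of 0
  have hslope : Filter.Tendsto (slope f 0) (nhdsWithin 0 {(0:ℝ)}ᶜ)
      (nhds (1 - 2 * (c * sg (c * 0)))) := hasDerivAt_iff_tendsto_slope.mp (hfd 0)
  have hev : ∀ᶠ u in nhdsWithin (0:ℝ) (Ioi 0), slope f 0 u < 0 :=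
    Filter.Eventually.filter_mono (nhdsWithin_mono 0 fun x hx => ne_of_gt hx)
      (hslope.eventually_lt_const hderiv0)
  obtain ⟨u₀, hu₀s, hu0⟩ := (hev.and eventually_mem_nhdsWithin).exists
  have hu0 : (0:ℝ) < u₀ := hu0
  have hfu0 : f u₀ < 0 := by
    have h : (f u₀ - f 0) / (u₀ - 0) < 0 := by rwa [slope_def_field] at hu₀s
    rw [hf0, sub_zero, sub_zero] at h
    by_contra hcon
    exact absurd (div_nonneg (not_lt.mp hcon) hu0.le) (not_le.mpr h)
  -- f is positive at u₀ + 2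
  have hfb : 0 < f (u₀ + 2) := by
    have hk : stdNormCDF (c * (u₀ + 2)) ≤ 1 := cdf_le_one _ _
    show 0 < 1 - 2 * stdNormCDF (c * (u₀ + 2)) + (u₀ + 2)
    linarith
  -- IVT gives a positive root
  obtain ⟨ustar, hmem, hroot⟩ : ∃ x ∈ Icc u₀ (u₀ + 2), f x = 0 := by
    have h0mem : (0:ℝ) ∈ Icc (f u₀) (f (u₀ + 2)) := ⟨hfu0.le, hfb.le⟩
    exact intermediate_value_Icc (by linarith) hfc.continuousOn h0mem
  have hupos : 0 < ustar := lt_of_lt_of_le hu0 hmem.1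
  -- strict convexity: if b > a > 0 is a root then f a < 0
  have hneg : ∀ a b : ℝ, 0 < a → a < b → f b = 0 → f a < 0 := by
    intro a b ha hab hfb0
    have hb0 : 0 < b := lt_trans ha hab
    have h := hconv.2 (Set.self_mem_Ici)
      (show b ∈ Ici (0:ℝ) from hb0.le) (ne_of_lt hb0)
      (show (0:ℝ) < 1 - a / b by
        rw [sub_pos]; exact (div_lt_one hb0).mpr hab)
      (div_pos ha hb0) (by ring)
    rw [hf0, hfb0] at h
    simp only [smul_eq_mul, smul_zero, mul_zero, zero_add, add_zero] at h
    rw [div_mul_cancel₀ _ (ne_of_gt hb0)] at h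
    exact h
  have huniq : ∀ x : ℝ, 0 < x → f x = 0 → x = ustar := by
    intro x hx hfx
    rcases lt_trichotomy x ustar with h | h | h
    · exact absurd hfx (ne_of_lt (hneg x ustar hx h hroot))
    · exact h
    · exact absurd hroot (ne_of_lt (hneg ustar x hupos h hfx))
  refine ⟨ustar, hupos, fun u => ⟨fun hu => ?_, ?_⟩⟩
  · rcases lt_trichotomy u 0 with h | h | h
    · left
      have hu' : f u = 0 := hu
      have hfu : f (-u) = 0 := by rw [hodd, hu', neg_zero]
      have := huniq (-u) (by linarith) hfu
      linarith
    · right; left; exact h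
    · right; right; exact huniq u h hu
  · rintro (rfl | rfl | rfl)
    · show f (-ustar) = 0
      rw [hodd, hroot, neg_zero]
    · exact hf0
    · exact hroot
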